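/- arXiv:1312.6838 — 3 statements merged into one kernel-verified Lean document; each statement's English description precedes it below -/
import Mathlib

section
/- Let Ã_S = P^{(S)} A denote the column-based low-rank approximation of A using column subset S. Then for any P ⊂ S, with R = S \ P and E = A - P^{(P)} A, one has Ã_S = Ã_P + Ẽ_R, where Ẽ_R = R^{(R)} E is the low-rank approximation of E based on the columns R of E. -/
open Matrix BigOperators

noncomputable section

/-- The submatrix of `A` consisting of the columns indexed by `S`. -/
def cols {m n : ℕ} (A : Matrix (Fin m) (Fin n) ℝ) (S : Finset (Fin n)) :
    Matrix (Fin m) {j // j ∈ S} ℝ :=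
  Matrix.of fun i j => A i j.1

/-- Orthogonal projection matrix onto the column span of `C`,
`C (Cᵀ C)⁻¹ Cᵀ`. -/
def projM {m : ℕ} {k : Type} [Fintype k] [DecidableEq k]
    (C : Matrix (Fin m) k ℝ) : Matrix (Fin m) (Fin m) ℝ :=
  C * (Cᵀ * C)⁻¹ * Cᵀ

/-- Squared Frobenius norm. -/
def frobSq {a b : Type} [Fintype a] [Fintype b] (A : Matrix a b ℝ) : ℝ :=
  ∑ i, ∑ j, (A i j) ^ 2

namespace Stmt5Aux

variable {m n : ℕ}

lemma cols_mul (M : Matrix (Fin m) (Fin m) ℝ) (A : Matrix (Fin m) (Fin n) ℝ)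
    (T : Finset (Fin n)) : cols (M * A) T = M * cols A T := by
  ext i j
  simp [cols, Matrix.mul_apply]

lemma cols_sub (A B : Matrix (Fin m) (Fin n) ℝ) (T : Finset (Fin n)) :
    cols (A - B) T = cols A T - cols B T := by
  ext i j
  simp [cols]

lemma projM_transpose {k : Type} [Fintype k] [DecidableEq k]
    (C : Matrix (Fin m) k ℝ) : (projM C)ᵀ = projM C := by
  simp [projM, Matrix.transpose_mul, Matrix.transpose_nonsing_inv, Matrix.mul_assoc]

lemma projM_mul {k : Type} [Fintype k] [DecidableEq k]
    {C : Matrix (Fin m) k ℝ} (h : IsUnit (Cᵀ * C)) : projM C * C = C := by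
  rw [projM, Matrix.mul_assoc, Matrix.mul_assoc,
    Matrix.nonsing_inv_mul _ ((Matrix.isUnit_iff_isUnit_det _).mp h), Matrix.mul_one]

lemma proj_uniq {α : Type} [Fintype α] {P1 P2 : Matrix (Fin m) (Fin m) ℝ}
    {B : Matrix (Fin m) α ℝ}
    (h1t : P1ᵀ = P1) (h2t : P2ᵀ = P2) (h1B : P1 * B = B) (h2B : P2 * B = B)
    (h1r : ∃ X : Matrix α (Fin m) ℝ, P1 = B * X) (h2r : ∃ X : Matrix α (Fin m) ℝ, P2 = B * X) : P1 = P2 := by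
  obtain ⟨X, hX⟩ := h1r
  obtain ⟨Y, hY⟩ := h2r
  have e1 : P1 * P2 = P2 := by rw [hY, ← Matrix.mul_assoc, h1B]
  have e2 : P2 * P1 = P1 := by rw [hX, ← Matrix.mul_assoc, h2B]
  have e3 : P2 * P1 = P2 := by
    have h := congrArg Matrix.transpose e1
    rwa [Matrix.transpose_mul, h1t, h2t] at h
  rw [← e2, e3]

/-- Selection matrix picking out the columns of `U` from those of `T`. -/
def sel (T U : Finset (Fin n)) : Matrix {j // j ∈ T} {j // j ∈ U} ℝ :=
  Matrix.of fun i j => if (i : Fin n) = (j : Fin n) then 1 else 0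

lemma sum_sub1 (T : Finset (Fin n)) (j : Fin n) (f : Fin n → ℝ) :
    (∑ x : {x // x ∈ T}, if (x : Fin n) = j then f (x : Fin n) else 0) =
      if j ∈ T then f j else 0 := by
  rw [Finset.sum_coe_sort T (fun x => if x = j then f x else 0)]
  exact Finset.sum_ite_eq' T j f

lemma sum_sub2 (T : Finset (Fin n)) (j : Fin n) (f : Fin n → ℝ) :
    (∑ x : {x // x ∈ T}, if j = (x : Fin n) then f (x : Fin n) else 0) =
      if j ∈ T then f j else 0 := by
  rw [Finset.sum_coe_sort T (fun x => if j = x then f x else 0)]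
  exact Finset.sum_ite_eq T j f

lemma cols_mul_sel (A : Matrix (Fin m) (Fin n) ℝ) {T U : Finset (Fin n)}
    (hUT : U ⊆ T) : cols A T * sel T U = cols A U := by
  ext i j
  simp only [Matrix.mul_apply, cols, sel, Matrix.of_apply, mul_ite, mul_one, mul_zero]
  rw [sum_sub1 T (j : Fin n) (fun x => A i x)]
  simp [hUT j.2]

lemma cols_split (A : Matrix (Fin m) (Fin n) ℝ) {S P : Finset (Fin n)}
    (hPS : P ⊆ S) :
    cols A S = cols A P * (sel S P)ᵀ + cols A (S \ P) * (sel S (S \ P))ᵀ := by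
  ext i j
  simp only [Matrix.add_apply, Matrix.mul_apply, cols, sel, Matrix.transpose_apply,
    Matrix.of_apply, mul_ite, mul_one, mul_zero]
  rw [sum_sub2 P (j : Fin n) (fun x => A i x),
    sum_sub2 (S \ P) (j : Fin n) (fun x => A i x)]
  by_cases hjP : (j : Fin n) ∈ P
  · simp [hjP]
  · simp [hjP, Finset.mem_sdiff, j.2]

end Stmt5Aux

open Stmt5Aux in
theorem stmt5 {m n : ℕ} (A : Matrix (Fin m) (Fin n) ℝ) (S P : Finset (Fin n))
    (hPS : P ⊂ S)
    (hS : IsUnit ((cols A S)ᵀ * cols A S))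
    (hP : IsUnit ((cols A P)ᵀ * cols A P))
    (hR : IsUnit ((cols (A - projM (cols A P) * A) (S \ P))ᵀ *
      cols (A - projM (cols A P) * A) (S \ P))) :
    projM (cols A S) * A =
      projM (cols A P) * A +
        projM (cols (A - projM (cols A P) * A) (S \ P)) *
          (A - projM (cols A P) * A) := by
  set B := cols A S with hB
  set C := cols A P with hC
  set Q := projM C with hQ
  set AR := cols A (S \ P) with hAR
  set F := AR - Q * AR with hF
  -- identify the columns of the residual with F
  have hEF : cols (A - Q * A) (S \ P) = F := by
    rw [cols_sub, cols_mul]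
  rw [hEF] at hR ⊢
  set G := projM F with hG
  -- basic facts about Q
  have hQt : Qᵀ = Q := projM_transpose C
  have hQC : Q * C = C := projM_mul hP
  have hQ2 : Q = C * ((Cᵀ * C)⁻¹ * Cᵀ) := by rw [hQ, projM, Matrix.mul_assoc]
  have hQQ : Q * Q = Q := by
    calc Q * Q = Q * (C * ((Cᵀ * C)⁻¹ * Cᵀ)) := by rw [← hQ2]
      _ = Q * C * ((Cᵀ * C)⁻¹ * Cᵀ) := by rw [Matrix.mul_assoc]
      _ = Q := by rw [hQC, ← hQ2]
  -- orthogonality facts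
  have hFtC : Fᵀ * C = 0 := by
    rw [hF, Matrix.transpose_sub, Matrix.transpose_mul, hQt,
      Matrix.sub_mul, Matrix.mul_assoc, hQC, sub_self]
  have hQF : Q * F = 0 := by
    rw [hF, Matrix.mul_sub, ← Matrix.mul_assoc, hQQ, sub_self]
  have hGC : G * C = 0 := by
    rw [hG, projM, Matrix.mul_assoc, Matrix.mul_assoc, hFtC]
    simp
  have hQG : Q * G = 0 := by
    rw [hG, projM, ← Matrix.mul_assoc, ← Matrix.mul_assoc, hQF]
    simp
  have hGQ : G * Q = 0 := by
    have h := congrArg Matrix.transpose hQG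
    rwa [Matrix.transpose_mul, hQt, projM_transpose, Matrix.transpose_zero] at h
  have hGF : G * F = F := projM_mul hR
  -- selection matrices
  have hCB : C = B * sel S P := (cols_mul_sel A hPS.subset).symm
  have hARB : AR = B * sel S (S \ P) := (cols_mul_sel A (Finset.sdiff_subset)).symm
  have hBsplit : B = C * (sel S P)ᵀ + AR * (sel S (S \ P))ᵀ := cols_split A hPS.subset
  -- the two candidate projections
  have h1t : (projM B)ᵀ = projM B := projM_transpose B
  have h2t : (Q + G)ᵀ = Q + G := by rw [Matrix.transpose_add, hQt, hG, projM_transpose]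
  have h1B : projM B * B = B := projM_mul hS
  have hQAR : Q * AR + F = AR := by rw [hF]; abel
  have h2B : (Q + G) * B = B := by
    have hPC : (Q + G) * C = C := by rw [Matrix.add_mul, hQC, hGC, add_zero]
    have hPAR : (Q + G) * AR = AR := by
      have : G * AR = F := by
        have : G * AR = G * (Q * AR) + G * F := by
          rw [← Matrix.mul_add, show Q * AR + F = AR from hQAR]
        rw [this, ← Matrix.mul_assoc, hGQ, Matrix.zero_mul, zero_add, hGF]
      rw [Matrix.add_mul, this, hQAR]
    calc (Q + G) * B = (Q + G) * C * (sel S P)ᵀ + (Q + G) * AR * (sel S (S \ P))ᵀ := by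
          rw [hBsplit, Matrix.mul_add, Matrix.mul_assoc, Matrix.mul_assoc]
      _ = B := by rw [hPC, hPAR, ← hBsplit]
  have h1r : ∃ X : Matrix {j // j ∈ S} (Fin m) ℝ, projM B = B * X := ⟨(Bᵀ * B)⁻¹ * Bᵀ, by rw [projM, Matrix.mul_assoc]⟩
  have h2r : ∃ X : Matrix {j // j ∈ S} (Fin m) ℝ, Q + G = B * X := by
    refine ⟨sel S P * ((Cᵀ * C)⁻¹ * Cᵀ) +
      (sel S (S \ P) - sel S P * ((Cᵀ * C)⁻¹ * Cᵀ * AR)) * ((Fᵀ * F)⁻¹ * Fᵀ), ?_⟩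
    have hQ' : Q = B * (sel S P * ((Cᵀ * C)⁻¹ * Cᵀ)) := by
      rw [hQ, projM, Matrix.mul_assoc, hCB, Matrix.mul_assoc]
    have hF' : F = B * (sel S (S \ P) - sel S P * ((Cᵀ * C)⁻¹ * Cᵀ * AR)) := by
      rw [hF, Matrix.mul_sub, ← hARB, hQ', Matrix.mul_assoc, Matrix.mul_assoc,
        Matrix.mul_assoc]
    have hG' : G = F * ((Fᵀ * F)⁻¹ * Fᵀ) := by rw [hG, projM, Matrix.mul_assoc]
    rw [Matrix.mul_add, ← hQ', ← Matrix.mul_assoc, ← hF', ← hG']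
  have hmain : projM B = Q + G := proj_uniq h1t h2t h1B h2B h1r h2r
  have hGE : G * (A - Q * A) = G * A := by
    rw [Matrix.mul_sub, ← Matrix.mul_assoc, hGQ, Matrix.zero_mul, sub_zero]
  rw [hmain, hGE, Matrix.add_mul]
end
end

section
/- Define F(S) = ‖A - P^{(S)} A‖_F². Then for any P ⊂ S, F(S) = F(P) - ‖Ẽ_R‖_F², where E = A - P^{(P)} A, R = S \ P, and Ẽ_R = R^{(R)} E is the low-rank approximation of E based on its columns in R. -/
open Matrix BigOperators

noncomputable section

lemma projM_transpose {m : ℕ} {k : Type} [Fintype k] [DecidableEq k]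
    (C : Matrix (Fin m) k ℝ) : (projM C)ᵀ = projM C := by
  simp [projM, Matrix.transpose_mul, Matrix.transpose_nonsing_inv, Matrix.mul_assoc]

lemma tr_projM {m : ℕ} {k : Type} [Fintype k] [DecidableEq k]
    {C : Matrix (Fin m) k ℝ} (h : IsUnit (Cᵀ * C)) : Cᵀ * projM C = Cᵀ := by
  have hd : IsUnit (Cᵀ * C).det := (Matrix.isUnit_iff_isUnit_det _).mp h
  rw [projM, ← Matrix.mul_assoc, ← Matrix.mul_assoc, Matrix.mul_nonsing_inv _ hd,
    Matrix.one_mul]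

lemma projM_mul {m : ℕ} {k : Type} [Fintype k] [DecidableEq k]
    {C : Matrix (Fin m) k ℝ} (h : IsUnit (Cᵀ * C)) : projM C * C = C := by
  have hd : IsUnit (Cᵀ * C).det := (Matrix.isUnit_iff_isUnit_det _).mp h
  rw [projM, Matrix.mul_assoc, Matrix.mul_assoc,
    Matrix.nonsing_inv_mul _ hd, Matrix.mul_one]

lemma projM_idem {m : ℕ} {k : Type} [Fintype k] [DecidableEq k]
    {C : Matrix (Fin m) k ℝ} (h : IsUnit (Cᵀ * C)) : projM C * projM C = projM C := by
  rw [show projM C * projM C = (projM C * C) * ((Cᵀ * C)⁻¹ * Cᵀ) by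
    simp only [projM, Matrix.mul_assoc], projM_mul h]
  simp only [projM, Matrix.mul_assoc]

lemma pyth {a b : Type} [Fintype a] [Fintype b] (E F : Matrix a b ℝ)
    (h : Fᵀ * F = Eᵀ * F) : frobSq (E - F) = frobSq E - frobSq F := by
  have key : ∑ i, ∑ j, F i j * F i j = ∑ i, ∑ j, E i j * F i j := by
    have h1 := congrArg Matrix.trace h
    simpa [Matrix.trace, Matrix.mul_apply, Matrix.diag, Finset.sum_comm (γ := a)] using h1
  have expand : ∀ i j, (E i j - F i j)^2 =
      E i j ^2 - F i j ^2 + 2*(F i j * F i j - E i j * F i j) := by intros; ring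
  simp only [frobSq, Matrix.sub_apply, expand, Finset.sum_add_distrib, Finset.sum_sub_distrib,
    ← Finset.mul_sum]
  rw [key]
  ring

theorem stmt7 {m n : ℕ} (A : Matrix (Fin m) (Fin n) ℝ) (S P : Finset (Fin n))
    (hPS : P ⊂ S)
    (hS : IsUnit ((cols A S)ᵀ * cols A S))
    (hP : IsUnit ((cols A P)ᵀ * cols A P))
    (hR : IsUnit ((cols (A - projM (cols A P) * A) (S \ P))ᵀ *
      cols (A - projM (cols A P) * A) (S \ P))) :
    frobSq (A - projM (cols A S) * A) =
      frobSq (A - projM (cols A P) * A) -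
        frobSq (projM (cols (A - projM (cols A P) * A) (S \ P)) *
          (A - projM (cols A P) * A)) := by
  set B := cols A S with hB
  set C := cols A P with hC
  set Pc := projM C with hPc
  set E := A - Pc * A with hE
  set D := cols E (S \ P) with hD
  set Q := projM D with hQ
  set Pb := projM B with hPb
  -- basic facts
  have hQt : Qᵀ = Q := projM_transpose D
  have hPct : Pcᵀ = Pc := projM_transpose C
  have hQQ : Q * Q = Q := projM_idem hR
  have hPcC : Pc * C = C := projM_mul hP
  have hQD : Q * D = D := projM_mul hR
  have hPbB : Pb * B = B := projM_mul hS
  -- Cᵀ * E = 0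
  have hCE : Cᵀ * E = 0 := by
    rw [hE, Matrix.mul_sub, ← Matrix.mul_assoc, tr_projM hP, sub_self]
  -- Cᵀ * D = 0
  have hCD : Cᵀ * D = 0 := by
    ext j k
    have := congrFun (congrFun hCE j) k.1
    simpa [hD, cols, Matrix.mul_apply] using this
  -- Pc * Q = 0
  have hPcQ : Pc * Q = 0 := by
    have hPcD : Pc * D = 0 := by
      rw [hPc, projM, Matrix.mul_assoc, hCD, Matrix.mul_zero]
    rw [hQ, projM, ← Matrix.mul_assoc, ← Matrix.mul_assoc, hPcD, Matrix.zero_mul, Matrix.zero_mul]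
  have hQPc : Q * Pc = 0 := by
    have := congrArg Matrix.transpose hPcQ
    simpa [Matrix.transpose_mul, hQt, hPct] using this
  -- Q * A = Q * E
  have hAEP : A = E + Pc * A := by rw [hE]; abel
  have hQA : Q * A = Q * E := by
    conv_lhs => rw [hAEP]
    rw [Matrix.mul_add, ← Matrix.mul_assoc, hQPc, Matrix.zero_mul, add_zero]
  -- columns in P of E vanish
  have hEP : ∀ i j, j ∈ P → E i j = 0 := by
    intro i j hj
    have h1 := congrFun (congrFun hPcC i) ⟨j, hj⟩
    simp only [hC, cols, Matrix.mul_apply, Matrix.of_apply] at h1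
    simp [hE, Matrix.sub_apply, Matrix.mul_apply, h1]
  have hPcAP : ∀ i j, j ∈ P → (Pc * A) i j = A i j := by
    intro i j hj
    have := hEP i j hj
    simp only [hE, Matrix.sub_apply] at this
    linarith
  -- columns in S \ P of Q*E agree with E
  have hQER : ∀ i j, j ∈ S \ P → (Q * E) i j = E i j := by
    intro i j hj
    have h1 := congrFun (congrFun hQD i) ⟨j, hj⟩
    simpa [hD, cols, Matrix.mul_apply] using h1
  -- (Pc + Q) * A agrees with A on columns in S
  have hMA : ∀ i j, j ∈ S → ((Pc + Q) * A) i j = A i j := by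
    intro i j hj
    rw [Matrix.add_mul, hQA]
    by_cases hp : j ∈ P
    · have hQE0 : (Q * E) i j = 0 := by
        simp only [Matrix.mul_apply]
        exact Finset.sum_eq_zero fun k _ => by rw [hEP k j hp, mul_zero]
      simp [Matrix.add_apply, hQE0, hPcAP i j hp]
    · have hr : j ∈ S \ P := Finset.mem_sdiff.mpr ⟨hj, hp⟩
      have h1 := hQER i j hr
      simp only [hE, Matrix.sub_apply] at h1
      simp only [Matrix.add_apply]
      rw [h1]; ring
  -- (Pc + Q) * B = B
  have hMB : (Pc + Q) * B = B := by
    ext i j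
    have := hMA i j.1 j.2
    simpa [hB, cols, Matrix.mul_apply] using this
  -- Pb * A agrees with A on columns in S
  have hPbA : ∀ i j, j ∈ S → (Pb * A) i j = A i j := by
    intro i j hj
    have h1 := congrFun (congrFun hPbB i) ⟨j, hj⟩
    simpa [hB, cols, Matrix.mul_apply] using h1
  -- Pb * C = C
  have hPbC : Pb * C = C := by
    ext i j
    have := hPbA i j.1 (hPS.subset j.2)
    simpa [hC, cols, Matrix.mul_apply] using this
  have hPbPc : Pb * Pc = Pc := by
    rw [hPc, projM, ← Matrix.mul_assoc, ← Matrix.mul_assoc, hPbC]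
  -- Pb * D = D
  have hPbD : Pb * D = D := by
    ext i j
    have hjS : j.1 ∈ S := (Finset.mem_sdiff.mp j.2).1
    have h1 : (Pb * E) i j.1 = E i j.1 := by
      rw [hE, Matrix.mul_sub, ← Matrix.mul_assoc, hPbPc]
      simp only [Matrix.sub_apply]
      rw [hPbA i j.1 hjS]
    simpa [hD, cols, Matrix.mul_apply] using h1
  have hPbQ : Pb * Q = Q := by
    rw [hQ, projM, ← Matrix.mul_assoc, ← Matrix.mul_assoc, hPbD]
  have hPbM : Pb * (Pc + Q) = Pc + Q := by rw [Matrix.mul_add, hPbPc, hPbQ]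
  have hMPb : (Pc + Q) * Pb = Pb := by
    rw [hPb, projM, ← Matrix.mul_assoc, ← Matrix.mul_assoc, hMB]
  -- Pb = Pc + Q
  have hPbMt : Pb * (Pc + Q) = Pb := by
    have := congrArg Matrix.transpose hMPb
    have hPbt : Pbᵀ = Pb := projM_transpose B
    simpa [Matrix.transpose_mul, Matrix.transpose_add, hQt, hPct, hPbt] using this
  have hmain : Pb = Pc + Q := by rw [← hPbMt, hPbM]
  -- rewrite the LHS residual
  have hres : A - Pb * A = E - Q * E := by
    rw [hmain, Matrix.add_mul, hQA, hE]
    abel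
  rw [hres]
  -- Pythagoras
  refine pyth E (Q * E) ?_
  rw [Matrix.transpose_mul, hQt, Matrix.mul_assoc, ← Matrix.mul_assoc Q Q E, hQQ]
end
end

section
/- Let Q ∈ ℝ^{m×l} have orthonormal columns, W = Qᵀ A, and let W̃_k be the best rank-k approximation of W (k ≤ l). Then Q W̃_k minimizes ‖A - A_{:S} T‖_F² over all T of rank at most k whenever span(Q) = span(A_{:S}); equivalently, Q W̃_k is the best rank-k approximation of A within the column space of A_{:S}. -/
open Matrix BigOperators

noncomputable section

lemma frobSq_eq_trace {a b : Type} [Fintype a] [Fintype b] (X : Matrix a b ℝ) :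
    frobSq X = Matrix.trace (Xᵀ * X) := by
  unfold frobSq Matrix.trace
  rw [Finset.sum_comm]
  simp [Matrix.mul_apply, Matrix.diag, sq]

lemma frobSq_add_of_orthog {a b : Type} [Fintype a] [Fintype b]
    (X Y : Matrix a b ℝ) (h : Xᵀ * Y = 0) :
    frobSq (X + Y) = frobSq X + frobSq Y := by
  have h' : Yᵀ * X = 0 := by
    have := congrArg Matrix.transpose h
    simpa [Matrix.transpose_mul] using this
  rw [frobSq_eq_trace, frobSq_eq_trace, frobSq_eq_trace, Matrix.transpose_add,
    Matrix.add_mul, Matrix.mul_add, Matrix.mul_add, h, h']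
  simp [Matrix.trace_add]

lemma frobSq_unitary_mul {m l b : ℕ} (Q : Matrix (Fin m) (Fin l) ℝ)
    (hQ : Qᵀ * Q = 1) (M : Matrix (Fin l) (Fin b) ℝ) :
    frobSq (Q * M) = frobSq M := by
  rw [frobSq_eq_trace, frobSq_eq_trace, Matrix.transpose_mul, Matrix.mul_assoc,
    ← Matrix.mul_assoc Qᵀ Q M, hQ, Matrix.one_mul]

lemma frobSq_key {m l n' : ℕ} (Q : Matrix (Fin m) (Fin l) ℝ) (hQ : Qᵀ * Q = 1)
    (A : Matrix (Fin m) (Fin n') ℝ) (B : Matrix (Fin l) (Fin n') ℝ) :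
    frobSq (A - Q * B) = frobSq (A - Q * (Qᵀ * A)) + frobSq (Qᵀ * A - B) := by
  have hdecomp : A - Q * B = (A - Q * (Qᵀ * A)) + Q * (Qᵀ * A - B) := by
    rw [Matrix.mul_sub]; abel
  have horth : (A - Q * (Qᵀ * A))ᵀ * (Q * (Qᵀ * A - B)) = 0 := by
    have h1 : (A - Q * (Qᵀ * A))ᵀ * Q = 0 := by
      rw [Matrix.transpose_sub, Matrix.sub_mul, Matrix.transpose_mul,
        Matrix.transpose_mul, Matrix.transpose_transpose]
      rw [Matrix.mul_assoc (Aᵀ * Q) Qᵀ Q, hQ, Matrix.mul_one]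
      simp [Matrix.mul_assoc]
    rw [← Matrix.mul_assoc, h1, Matrix.zero_mul]
  rw [hdecomp, frobSq_add_of_orthog _ _ horth, frobSq_unitary_mul Q hQ]

theorem stmt18 {m n l k : ℕ} (hk : k ≤ l) (A : Matrix (Fin m) (Fin n) ℝ)
    (S : Finset (Fin n)) (hl : S.card = l)
    (hS : IsUnit ((cols A S)ᵀ * cols A S))
    (Q : Matrix (Fin m) (Fin l) ℝ) (hQ : Qᵀ * Q = 1)
    (hspan : Submodule.span ℝ (Set.range Qᵀ) =
      Submodule.span ℝ (Set.range (cols A S)ᵀ))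
    (Wk : Matrix (Fin l) (Fin n) ℝ) (hWkrank : Wk.rank ≤ k)
    (hWk : ∀ Z : Matrix (Fin l) (Fin n) ℝ, Z.rank ≤ k →
      frobSq (Qᵀ * A - Wk) ≤ frobSq (Qᵀ * A - Z)) :
    (∃ T₀ : Matrix {j // j ∈ S} (Fin n) ℝ, T₀.rank ≤ k ∧ cols A S * T₀ = Q * Wk) ∧
      ∀ T : Matrix {j // j ∈ S} (Fin n) ℝ, T.rank ≤ k →
        frobSq (A - Q * Wk) ≤ frobSq (A - cols A S * T) := by
  set C := cols A S with hCdef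
  -- every column of C is a combination of columns of Q
  have hcolC : ∀ j0 : {j // j ∈ S}, ∃ c : Fin l → ℝ,
      ∀ i, ∑ x, Q i x * c x = C i j0 := by
    intro j0
    have hmem : Cᵀ j0 ∈ Submodule.span ℝ (Set.range Qᵀ) := by
      rw [hspan]; exact Submodule.subset_span ⟨j0, rfl⟩
    obtain ⟨c, hc⟩ := Submodule.mem_span_range_iff_exists_fun ℝ |>.1 hmem
    refine ⟨c, fun i => ?_⟩
    have := congrFun hc i
    simpa [Matrix.transpose_apply, Finset.sum_apply, mul_comm] using this
  -- every column of Q is a combination of columns of C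
  have hcolQ : ∀ j0 : Fin l, ∃ c : {j // j ∈ S} → ℝ,
      ∀ i, ∑ x, C i x * c x = Q i j0 := by
    intro j0
    have hmem : Qᵀ j0 ∈ Submodule.span ℝ (Set.range Cᵀ) := by
      rw [← hspan]; exact Submodule.subset_span ⟨j0, rfl⟩
    obtain ⟨c, hc⟩ := Submodule.mem_span_range_iff_exists_fun ℝ |>.1 hmem
    refine ⟨c, fun i => ?_⟩
    have := congrFun hc i
    simpa [Matrix.transpose_apply, Finset.sum_apply, mul_comm] using this
  choose cC hcC using hcolC
  choose cQ hcQ using hcolQ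
  have hR : Q * (Matrix.of fun x j => cC j x) = C := by
    ext i j; simpa [Matrix.mul_apply] using hcC j i
  have hR' : C * (Matrix.of fun x j => cQ j x) = Q := by
    ext i j; simpa [Matrix.mul_apply] using hcQ j i
  have hQQC : Q * (Qᵀ * C) = C := by
    rw [← hR, ← Matrix.mul_assoc Qᵀ Q _, hQ, Matrix.one_mul]
  constructor
  · refine ⟨(Matrix.of fun x j => cQ j x) * Wk, ?_, ?_⟩
    · exact le_trans (Matrix.rank_mul_le_right _ _) hWkrank
    · rw [← Matrix.mul_assoc, hR']
  · intro T hT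
    have hrankZ : ((Qᵀ * C) * T).rank ≤ k :=
      le_trans (Matrix.rank_mul_le_right _ _) hT
    have hCT : A - C * T = A - Q * ((Qᵀ * C) * T) := by
      rw [← Matrix.mul_assoc Q, hQQC]
    calc frobSq (A - Q * Wk)
        = frobSq (A - Q * (Qᵀ * A)) + frobSq (Qᵀ * A - Wk) := frobSq_key Q hQ A Wk
      _ ≤ frobSq (A - Q * (Qᵀ * A)) + frobSq (Qᵀ * A - (Qᵀ * C) * T) := by
          exact add_le_add_right (hWk _ hrankZ) _
      _ = frobSq (A - C * T) := by rw [hCT]; exact (frobSq_key Q hQ A _).symm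
end
end
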